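/- Let n, m, k, r be positive integers with n ≥ m ≥ k², and let ε ∈ (0,1] be a real with ε ≥ 3r·√(k·ln(n+1)) / m^{k/4}. Then there exists an (ε,ε,m)-balanced coloring γ : C([n],k) → [r]. -/

import Mathlib

/-- The coloring `γ` of the `k`-element subsets of `{1,…,n}` with `r` colors is
`ε`-balanced on `A`. -/
def EpsBalancedOn {n k r : ℕ} (γ : {S : Finset (Fin n) // S.card = k} → Fin r) (ε : ℝ)
    (A : Finset (Fin n)) : Prop :=
  ∀ i : Fin r,
    ((1 - ε) / r) * (A.card.choose k : ℝ) ≤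
      (Nat.card {S : {S : Finset (Fin n) // S.card = k} // γ S = i ∧ S.1 ⊆ A} : ℝ) ∧
    (Nat.card {S : {S : Finset (Fin n) // S.card = k} // γ S = i ∧ S.1 ⊆ A} : ℝ) ≤
      ((1 + ε) / r) * (A.card.choose k : ℝ)

/-- `γ` is `(ε,δ,m)`-balanced: for each `ℓ ∈ {m,…,n}`, a uniformly random `ℓ`-element
subset of `{1,…,n}` is `ε`-balanced for `γ` with probability at least `1 - δ`. -/
def IsBalancedColoring {n k r : ℕ} (m : ℕ) (ε δ : ℝ)
    (γ : {S : Finset (Fin n) // S.card = k} → Fin r) : Prop :=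
  ∀ ℓ : ℕ, m ≤ ℓ → ℓ ≤ n →
    (1 - δ) * (n.choose ℓ : ℝ) ≤
      (Nat.card {A : Finset (Fin n) // A.card = ℓ ∧ EpsBalancedOn γ ε A} : ℝ)

open Finset

section GeneralChernoff
variable {α : Type*} [Fintype α] [DecidableEq α] {r : ℕ}

/-- MGF identity: sum over all colorings of exp(t * count). -/
lemma sum_exp_count (T : Finset α) (i : Fin r) (t : ℝ) :
    ∑ γ : α → Fin r, Real.exp (t * ((T.filter fun s => γ s = i).card : ℝ)) =
      (r : ℝ) ^ (Fintype.card α - T.card) * (Real.exp t + ((r : ℝ) - 1)) ^ T.card := by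
  have hstep : ∀ γ : α → Fin r,
      Real.exp (t * ((T.filter fun s => γ s = i).card : ℝ)) =
      ∏ s : α, (if s ∈ T then (if γ s = i then Real.exp t else 1) else 1) := by
    intro γ
    rw [Finset.card_filter]
    push_cast
    rw [Finset.mul_sum, Real.exp_sum]
    rw [← Finset.prod_subset (Finset.subset_univ T)]
    · apply Finset.prod_congr rfl
      intro s hs
      simp only [hs, if_true]
      split <;> simp
    · intro s _ hs
      simp [hs]
  simp_rw [hstep]
  rw [← Fintype.prod_sum (fun s (c : Fin r) => if s ∈ T then (if c = i then Real.exp t else 1) else 1)]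
  have hcol : ∀ s : α, (∑ c : Fin r, (if s ∈ T then (if c = i then Real.exp t else 1) else 1)) =
      if s ∈ T then Real.exp t + ((r : ℝ) - 1) else (r : ℝ) := by
    intro s
    split
    · have : ∀ c : Fin r, (if c = i then Real.exp t else 1) = 1 + (if c = i then Real.exp t - 1 else 0) := by
        intro c; split <;> ring
      simp_rw [this, Finset.sum_add_distrib, Finset.sum_const, Finset.sum_ite_eq' Finset.univ i]
      simp [Finset.card_univ]
      ring
    · simp [Finset.card_univ]
  simp_rw [hcol]
  rw [← Finset.prod_mul_prod_compl T]
  rw [Finset.prod_congr rfl (fun s hs => if_pos hs),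
      Finset.prod_congr rfl (fun s (hs : s ∈ Tᶜ) => if_neg (Finset.mem_compl.mp hs))]
  rw [Finset.prod_const, Finset.prod_const, Finset.card_compl]
  ring


/-- exp x ≤ 1 + x + x² for |x| ≤ 1. -/
lemma exp_le_one_add_add_sq {x : ℝ} (hx : |x| ≤ 1) : Real.exp x ≤ 1 + x + x ^ 2 := by
  have h := Real.exp_bound hx (by norm_num : 0 < 2)
  have h2 : (∑ i ∈ Finset.range 2, x ^ i / (Nat.factorial i : ℝ)) = 1 + x := by
    simp [Finset.sum_range_succ]
  rw [h2] at h
  have h3 : |x| ^ 2 * ((2 + 1 : ℕ) / ((Nat.factorial 2 : ℝ) * 2)) = (3/4) * x ^ 2 := by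
    rw [sq_abs]; norm_num [Nat.factorial]; ring
  have h4 : Real.exp x - (1 + x) ≤ (3/4) * x ^ 2 := by
    calc Real.exp x - (1 + x) ≤ |Real.exp x - (1 + x)| := le_abs_self _
    _ ≤ _ := h
    _ = (3/4) * x ^ 2 := h3
  nlinarith [sq_nonneg x]

/-- Key analytic bound for the MGF. -/
lemma mgf_base_bound {r : ℕ} (hr : 1 ≤ r) {t : ℝ} (ht : |t| ≤ 1) :
    Real.exp t + ((r : ℝ) - 1) ≤ (r : ℝ) * Real.exp ((t + t ^ 2) / r) := by
  have hr' : (1 : ℝ) ≤ (r : ℝ) := by exact_mod_cast hr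
  have h1 : Real.exp t + ((r : ℝ) - 1) ≤ (r : ℝ) * (1 + (t + t ^ 2) / r) := by
    have := exp_le_one_add_add_sq ht
    have hrpos : (0 : ℝ) < r := by linarith
    rw [mul_add, mul_one, mul_div_cancel₀ _ hrpos.ne']
    linarith
  refine h1.trans ?_
  have := Real.add_one_le_exp ((t + t ^ 2) / r)
  have hrpos : (0 : ℝ) ≤ r := by linarith
  nlinarith


lemma chernoff_aux (T : Finset α) (i : Fin r) (hr : 1 ≤ r) {t : ℝ} (ht : |t| ≤ 1) (a : ℝ)
    (p : (α → Fin r) → Prop) [DecidablePred p]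
    (hp : ∀ γ, p γ → t * a ≤ t * ((T.filter fun s => γ s = i).card : ℝ)) :
    ((univ.filter p).card : ℝ) ≤
      (r : ℝ) ^ Fintype.card α * Real.exp ((T.card : ℝ) * (t + t ^ 2) / r - t * a) := by
  have hrpos : (0 : ℝ) < r := by exact_mod_cast hr
  have h1 : ((univ.filter p).card : ℝ) * Real.exp (t * a) ≤
      (r : ℝ) ^ (Fintype.card α - T.card) * (Real.exp t + ((r : ℝ) - 1)) ^ T.card := by
    rw [← sum_exp_count T i t]
    calc ((univ.filter p).card : ℝ) * Real.exp (t * a)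
        = ∑ _γ ∈ univ.filter p, Real.exp (t * a) := by
          rw [Finset.sum_const, nsmul_eq_mul]
      _ ≤ ∑ γ ∈ univ.filter p, Real.exp (t * ((T.filter fun s => γ s = i).card : ℝ)) :=
          Finset.sum_le_sum fun γ hγ => Real.exp_le_exp.mpr (hp γ (Finset.mem_filter.mp hγ).2)
      _ ≤ ∑ γ : α → Fin r, Real.exp (t * ((T.filter fun s => γ s = i).card : ℝ)) :=
          Finset.sum_le_sum_of_subset_of_nonneg (Finset.filter_subset _ _)
            (fun _ _ _ => (Real.exp_pos _).le)
  have hbase : (0 : ℝ) ≤ Real.exp t + ((r : ℝ) - 1) := by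
    have : (1:ℝ) ≤ (r:ℝ) := by exact_mod_cast hr
    have := (Real.exp_pos t).le
    linarith
  have h2 : (Real.exp t + ((r : ℝ) - 1)) ^ T.card ≤
      ((r : ℝ) * Real.exp ((t + t ^ 2) / r)) ^ T.card :=
    pow_le_pow_left₀ hbase (mgf_base_bound hr ht) _
  have hNM : T.card ≤ Fintype.card α := by
    simpa using Finset.card_le_univ T
  have h3 : (r : ℝ) ^ (Fintype.card α - T.card) * ((r : ℝ) * Real.exp ((t + t ^ 2) / r)) ^ T.card
      = (r : ℝ) ^ Fintype.card α * Real.exp ((T.card : ℝ) * (t + t ^ 2) / r) := by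
    rw [mul_pow, ← Real.exp_nat_mul, ← mul_assoc, ← pow_add, Nat.sub_add_cancel hNM,
      mul_div_assoc]
  have h4 : ((univ.filter p).card : ℝ) * Real.exp (t * a) ≤
      (r : ℝ) ^ Fintype.card α * Real.exp ((T.card : ℝ) * (t + t ^ 2) / r) := by
    calc ((univ.filter p).card : ℝ) * Real.exp (t * a) ≤ _ := h1
      _ ≤ (r : ℝ) ^ (Fintype.card α - T.card) *
            ((r : ℝ) * Real.exp ((t + t ^ 2) / r)) ^ T.card := by
          apply mul_le_mul_of_nonneg_left h2 (by positivity)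
      _ = _ := h3
  rw [Real.exp_sub, ← mul_div_assoc, le_div_iff₀ (Real.exp_pos _)]
  exact h4

lemma chernoff (T : Finset α) (i : Fin r) (hr : 1 ≤ r) {ε : ℝ} (hε0 : 0 < ε) (hε1 : ε ≤ 1) :
    ((univ.filter fun γ : α → Fin r =>
        ((T.filter fun s => γ s = i).card : ℝ) ≤ (1 - ε) * T.card / r).card : ℝ)
    + ((univ.filter fun γ : α → Fin r =>
        (1 + ε) * T.card / r ≤ ((T.filter fun s => γ s = i).card : ℝ)).card : ℝ)
    ≤ 2 * Real.exp (-(ε ^ 2 * T.card) / (4 * r)) * (r : ℝ) ^ Fintype.card α := by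
  have hrpos : (0 : ℝ) < r := by exact_mod_cast hr
  have ht1 : |(-(ε/2) : ℝ)| ≤ 1 := by rw [abs_neg, abs_of_pos (by linarith)]; linarith
  have ht2 : |((ε/2) : ℝ)| ≤ 1 := by rw [abs_of_pos (by linarith)]; linarith
  have hlow := chernoff_aux T i hr ht1 ((1 - ε) * T.card / r)
    (fun γ : α → Fin r => ((T.filter fun s => γ s = i).card : ℝ) ≤ (1 - ε) * T.card / r)
    (fun γ hγ => mul_le_mul_of_nonpos_left hγ (by linarith))
  have hhigh := chernoff_aux T i hr ht2 ((1 + ε) * T.card / r)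
    (fun γ : α → Fin r => (1 + ε) * T.card / r ≤ ((T.filter fun s => γ s = i).card : ℝ))
    (fun γ hγ => mul_le_mul_of_nonneg_left hγ (by linarith))
  have e1 : (T.card : ℝ) * (-(ε/2) + (-(ε/2)) ^ 2) / r - (-(ε/2)) * ((1 - ε) * T.card / r)
      = -(ε ^ 2 * T.card) / (4 * r) := by field_simp; ring
  have e2 : (T.card : ℝ) * ((ε/2) + (ε/2) ^ 2) / r - (ε/2) * ((1 + ε) * T.card / r)
      = -(ε ^ 2 * T.card) / (4 * r) := by field_simp; ring
  rw [e1] at hlow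
  rw [e2] at hhigh
  have := add_le_add hlow hhigh
  calc _ ≤ _ := this
    _ = 2 * Real.exp (-(ε ^ 2 * T.card) / (4 * r)) * (r : ℝ) ^ Fintype.card α := by ring

end GeneralChernoff

section SpecificCounting
variable {n k r : ℕ}

lemma card_subsets_filter (A : Finset (Fin n)) :
    (univ.filter fun S : {S : Finset (Fin n) // S.card = k} => S.1 ⊆ A).card
      = A.card.choose k := by
  rw [← Finset.card_powersetCard k A]
  apply Finset.card_bij (fun S _ => S.1)
  · intro S hS
    rw [Finset.mem_powersetCard]
    exact ⟨(Finset.mem_filter.mp hS).2, S.2⟩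
  · intro S₁ h₁ S₂ h₂ h
    exact Subtype.ext h
  · intro B hB
    rw [Finset.mem_powersetCard] at hB
    exact ⟨⟨B, hB.2⟩, Finset.mem_filter.mpr ⟨Finset.mem_univ _, hB.1⟩, rfl⟩

lemma natcard_count (γ : {S : Finset (Fin n) // S.card = k} → Fin r) (i : Fin r)
    (A : Finset (Fin n)) :
    Nat.card {S : {S : Finset (Fin n) // S.card = k} // γ S = i ∧ S.1 ⊆ A}
      = ((univ.filter fun S : {S : Finset (Fin n) // S.card = k} => S.1 ⊆ A).filter
          fun S => γ S = i).card := by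
  rw [Nat.card_eq_fintype_card, Fintype.card_subtype, Finset.filter_filter]
  congr 1
  ext S
  simp [and_comm]

open scoped Classical in
lemma badA_bound (hr : 1 ≤ r) {ε : ℝ} (hε0 : 0 < ε) (hε1 : ε ≤ 1) (A : Finset (Fin n)) :
    ((univ.filter fun γ : {S : Finset (Fin n) // S.card = k} → Fin r =>
        ¬ EpsBalancedOn γ ε A).card : ℝ) ≤
      (r : ℝ) * (2 * Real.exp (-(ε ^ 2 * (A.card.choose k : ℝ)) / (4 * r)) *
        (r : ℝ) ^ Fintype.card {S : Finset (Fin n) // S.card = k}) := by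
  set α := {S : Finset (Fin n) // S.card = k}
  set T : Finset α := univ.filter fun S : α => S.1 ⊆ A with hTdef
  have hT : T.card = A.card.choose k := card_subsets_filter A
  have hrpos : (0 : ℝ) < r := by exact_mod_cast hr
  set Low : Fin r → Finset (α → Fin r) := fun i => univ.filter fun γ : α → Fin r =>
      ((T.filter fun s => γ s = i).card : ℝ) ≤ (1 - ε) * T.card / r with hLow
  set High : Fin r → Finset (α → Fin r) := fun i => univ.filter fun γ : α → Fin r =>
      (1 + ε) * T.card / r ≤ ((T.filter fun s => γ s = i).card : ℝ) with hHigh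
  have hthresh_lo : ((1 - ε) / r) * (A.card.choose k : ℝ) = (1 - ε) * T.card / r := by
    rw [hT]; ring
  have hthresh_hi : ((1 + ε) / r) * (A.card.choose k : ℝ) = (1 + ε) * T.card / r := by
    rw [hT]; ring
  have hsub : (univ.filter fun γ : α → Fin r => ¬ EpsBalancedOn γ ε A) ⊆
      (univ : Finset (Fin r)).biUnion fun i => Low i ∪ High i := by
    intro γ hγ
    have hbad := (Finset.mem_filter.mp hγ).2
    rw [EpsBalancedOn] at hbad
    push_neg at hbad
    obtain ⟨i, hi⟩ := hbad
    rw [Finset.mem_biUnion]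
    refine ⟨i, Finset.mem_univ _, ?_⟩
    have hcnt : (Nat.card {S : α // γ S = i ∧ S.1 ⊆ A} : ℝ)
        = ((T.filter fun s => γ s = i).card : ℝ) := by
      rw [natcard_count]
    rw [Finset.mem_union]
    by_cases hcase : ((1 - ε) / r) * (A.card.choose k : ℝ) ≤
        (Nat.card {S : α // γ S = i ∧ S.1 ⊆ A} : ℝ)
    · right
      have := hi hcase
      rw [Finset.mem_filter]
      refine ⟨Finset.mem_univ _, ?_⟩
      rw [← hcnt, ← hthresh_hi]
      linarith
    · left
      rw [Finset.mem_filter]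
      refine ⟨Finset.mem_univ _, ?_⟩
      rw [← hcnt, ← hthresh_lo]
      linarith
  have hcard1 : (univ.filter fun γ : α → Fin r => ¬ EpsBalancedOn γ ε A).card ≤
      ∑ i : Fin r, (Low i ∪ High i).card :=
    le_trans (Finset.card_le_card hsub) (Finset.card_biUnion_le)
  have hc : (A.card.choose k : ℝ) = (T.card : ℝ) := by exact_mod_cast hT.symm
  rw [hc]
  calc ((univ.filter fun γ : α → Fin r => ¬ EpsBalancedOn γ ε A).card : ℝ)
      ≤ (∑ i : Fin r, (Low i ∪ High i).card : ℕ) := by exact_mod_cast hcard1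
    _ = ∑ i : Fin r, ((Low i ∪ High i).card : ℝ) := by push_cast; ring
    _ ≤ ∑ i : Fin r, (((Low i).card : ℝ) + ((High i).card : ℝ)) := by
        apply Finset.sum_le_sum
        intro i _
        exact_mod_cast Finset.card_union_le _ _
    _ ≤ ∑ _i : Fin r, (2 * Real.exp (-(ε ^ 2 * (T.card : ℝ)) / (4 * r)) *
          (r : ℝ) ^ Fintype.card α) := Finset.sum_le_sum fun i _ => chernoff T i hr hε0 hε1
    _ = (r : ℝ) * (2 * Real.exp (-(ε ^ 2 * (T.card : ℝ)) / (4 * r)) *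
          (r : ℝ) ^ Fintype.card α) := by
        rw [Finset.sum_const, Finset.card_univ, Fintype.card_fin, nsmul_eq_mul]

end SpecificCounting

lemma div_pow_le_choose : ∀ (k m : ℕ), k ≤ m → ((m : ℝ) / k) ^ k ≤ (m.choose k : ℝ)
  | 0, m, _ => by simp
  | (k+1), m, hkm => by
    have hm1 : 1 ≤ m := le_trans (Nat.succ_le_succ (Nat.zero_le k)) hkm
    have hk' : k ≤ m - 1 := by omega
    have IH := div_pow_le_choose k (m - 1) hk'
    have hrec : (m.choose (k+1) : ℝ) = (m : ℝ) / (k+1) * (((m-1).choose k : ℕ) : ℝ) := by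
      have h := Nat.add_one_mul_choose_eq (m-1) k
      have hm : m - 1 + 1 = m := by omega
      rw [hm] at h
      have h2 : ((m : ℕ) : ℝ) * (((m-1).choose k : ℕ) : ℝ) =
          ((m.choose (k+1) : ℕ) : ℝ) * ((k+1 : ℕ) : ℝ) := by exact_mod_cast congrArg Nat.cast h
      push_cast at h2 ⊢
      field_simp
      linarith
    rw [hrec]
    have hbase : (0:ℝ) ≤ (m : ℝ) / (k+1 : ℕ) := by positivity
    rcases Nat.eq_zero_or_pos k with hk0 | hkpos
    · subst hk0; simp
    · have hfrac : ((m : ℝ) / ((k:ℝ)+1)) ≤ (((m - 1 : ℕ)) : ℝ) / k := by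
        have hkR : (0:ℝ) < k := by exact_mod_cast hkpos
        have hcast : (((m - 1 : ℕ)) : ℝ) = (m : ℝ) - 1 := by
          push_cast [Nat.cast_sub hm1]; ring
        rw [hcast, div_le_div_iff₀ (by linarith) hkR]
        have hmk : (k:ℝ) + 1 ≤ (m:ℝ) := by exact_mod_cast hkm
        nlinarith
      have h1 : ((m : ℝ) / ((k:ℝ)+1)) ^ k ≤ ((((m - 1 : ℕ)) : ℝ) / k) ^ k :=
        pow_le_pow_left₀ (by positivity) hfrac k
      have h2 : ((m : ℝ) / ((k:ℝ)+1)) ^ (k+1) =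
          ((m : ℝ) / ((k:ℝ)+1)) * ((m : ℝ) / ((k:ℝ)+1)) ^ k := by ring
      push_cast
      push_cast at h2
      rw [h2]
      apply mul_le_mul_of_nonneg_left (le_trans h1 IH) (by positivity)

set_option maxHeartbeats 1000000 in
lemma key_numeric (n m k r : ℕ) (hk : 0 < k) (hr : 0 < r) (hkm : k ^ 2 ≤ m) (hmn : m ≤ n)
    {ε : ℝ} (hε0 : 0 < ε) (hε1 : ε ≤ 1)
    (h : 3 * r * Real.sqrt (k * Real.log ((n : ℝ) + 1)) / (m : ℝ) ^ ((k : ℝ) / 4) ≤ ε) :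
    ((n + 1 - m : ℕ) : ℝ) * (2 * r * Real.exp (-(ε ^ 2 * (m.choose k : ℝ)) / (4 * r))) / ε
      < 1 := by
  have hm1 : 1 ≤ m := le_trans (Nat.one_le_pow _ _ hk) hkm
  have hn1 : 1 ≤ n := le_trans hm1 hmn
  set L : ℝ := Real.log ((n : ℝ) + 1) with hLdef
  have hL2 : Real.log 2 ≤ L := by
    apply Real.log_le_log (by norm_num)
    have : (1:ℝ) ≤ (n:ℝ) := by exact_mod_cast hn1
    linarith
  have hlog2 : (0.6931471803 : ℝ) < Real.log 2 := Real.log_two_gt_d9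
  have hLpos : 0 < L := by linarith
  have hkR : (1:ℝ) ≤ (k:ℝ) := by exact_mod_cast hk
  have hrR : (1:ℝ) ≤ (r:ℝ) := by exact_mod_cast hr
  have hkL : (0:ℝ) < (k:ℝ) * L := by positivity
  have hsq : (0:ℝ) < Real.sqrt ((k:ℝ) * L) := Real.sqrt_pos.mpr hkL
  have hmpos : (0:ℝ) < (m:ℝ) := by exact_mod_cast hm1
  have hnm : (m:ℝ) ≤ (n:ℝ) + 1 := by
    have : (m:ℝ) ≤ (n:ℝ) := by exact_mod_cast hmn
    linarith
  have hrpow : ∀ c : ℝ, 0 ≤ c → (m:ℝ) ^ (c : ℝ) ≤ Real.exp (c * L) := by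
    intro c hc
    rw [Real.rpow_def_of_pos hmpos]
    apply Real.exp_le_exp.mpr
    have := Real.log_le_log hmpos hnm
    nlinarith
  have hmq : (0:ℝ) < (m:ℝ) ^ ((k:ℝ)/4) := Real.rpow_pos_of_pos hmpos _
  set a : ℝ := 3 * r * Real.sqrt ((k:ℝ) * L) / (m:ℝ) ^ ((k:ℝ)/4) with hadef
  have hapos : 0 < a := by positivity
  have hmhalf : ((m:ℝ) ^ ((k:ℝ)/4)) ^ 2 = (m:ℝ) ^ ((k:ℝ)/2) := by
    rw [← Real.rpow_natCast ((m:ℝ) ^ ((k:ℝ)/4)) 2, ← Real.rpow_mul hmpos.le]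
    congr 1
    push_cast; ring
  have ha2 : a ^ 2 = 9 * r ^ 2 * ((k:ℝ) * L) / (m:ℝ) ^ ((k:ℝ)/2) := by
    rw [hadef, div_pow, mul_pow, mul_pow, Real.sq_sqrt hkL.le, hmhalf]
    ring
  have hkm' : k ≤ m := le_trans (Nat.le_self_pow two_ne_zero k) hkm
  have hchoose : (m:ℝ) ^ ((k:ℝ)/2) ≤ (m.choose k : ℝ) := by
    have h1 : ((m:ℝ) / k) ^ k ≤ (m.choose k : ℝ) := div_pow_le_choose k m hkm'
    have hsqm : Real.sqrt (m:ℝ) ≤ (m:ℝ) / k := by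
      have hkpos : (0:ℝ) < (k:ℝ) := by linarith
      rw [le_div_iff₀ hkpos]
      have hks : (k:ℝ) ≤ Real.sqrt (m:ℝ) := by
        rw [show (k:ℝ) = Real.sqrt ((k:ℝ)^2) by rw [Real.sqrt_sq (by linarith)]]
        apply Real.sqrt_le_sqrt
        exact_mod_cast hkm
      calc Real.sqrt (m:ℝ) * (k:ℝ) ≤ Real.sqrt (m:ℝ) * Real.sqrt (m:ℝ) :=
            mul_le_mul_of_nonneg_left hks (Real.sqrt_nonneg _)
        _ = (m:ℝ) := Real.mul_self_sqrt hmpos.le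
    have h2 : (m:ℝ) ^ ((k:ℝ)/2) = (Real.sqrt (m:ℝ)) ^ k := by
      rw [Real.sqrt_eq_rpow, ← Real.rpow_natCast ((m:ℝ) ^ ((1:ℝ)/2)) k,
        ← Real.rpow_mul hmpos.le]
      congr 1
      ring
    rw [h2]
    exact le_trans (pow_le_pow_left₀ (Real.sqrt_nonneg _) hsqm k) h1
  have hε2 : a ^ 2 ≤ ε ^ 2 := pow_le_pow_left₀ hapos.le h 2
  have hmain : 9 * (r:ℝ) ^ 2 * ((k:ℝ) * L) ≤ ε ^ 2 * (m.choose k : ℝ) := by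
    have hmq2 : (0:ℝ) < (m:ℝ) ^ ((k:ℝ)/2) := Real.rpow_pos_of_pos hmpos _
    calc 9 * (r:ℝ) ^ 2 * ((k:ℝ) * L)
        = (9 * r ^ 2 * ((k:ℝ) * L) / (m:ℝ) ^ ((k:ℝ)/2)) * (m:ℝ) ^ ((k:ℝ)/2) := by
          field_simp
      _ = a ^ 2 * (m:ℝ) ^ ((k:ℝ)/2) := by rw [ha2]
      _ ≤ ε ^ 2 * (m.choose k : ℝ) := by
          apply mul_le_mul hε2 hchoose hmq2.le (by positivity)
  set X : ℝ := (9/4) * ((r:ℝ) * ((k:ℝ) * L)) with hXdef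
  set c : ℝ := (k:ℝ)/4 * L with hcdef
  have hexp1 : Real.exp (-(ε ^ 2 * (m.choose k : ℝ)) / (4 * r)) ≤ Real.exp (-X) := by
    apply Real.exp_le_exp.mpr
    rw [div_le_iff₀ (by positivity), hXdef]
    nlinarith
  rw [div_lt_one hε0]
  have hP1 : ((n + 1 - m : ℕ) : ℝ) ≤ Real.exp L := by
    have h1 : ((n + 1 - m : ℕ) : ℝ) ≤ ((n + 1 : ℕ) : ℝ) := by
      exact_mod_cast Nat.cast_le.mpr (Nat.sub_le _ _)
    have h2 : Real.exp L = (n:ℝ) + 1 := Real.exp_log (by positivity)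
    rw [h2]; push_cast at h1 ⊢; linarith
  have haeps : 3 * (r:ℝ) * Real.sqrt ((k:ℝ) * L) * Real.exp (-c) ≤ ε := by
    refine le_trans ?_ h
    have hb : (m:ℝ) ^ ((k:ℝ)/4) ≤ Real.exp c := by
      rw [hcdef]; exact hrpow _ (by positivity)
    rw [hadef, le_div_iff₀ hmq]
    calc 3 * (r:ℝ) * Real.sqrt ((k:ℝ) * L) * Real.exp (-c) * (m:ℝ) ^ ((k:ℝ)/4)
        ≤ 3 * (r:ℝ) * Real.sqrt ((k:ℝ) * L) * Real.exp (-c) * Real.exp c := by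
          apply mul_le_mul_of_nonneg_left hb (by positivity)
      _ = 3 * (r:ℝ) * Real.sqrt ((k:ℝ) * L) := by
          rw [mul_assoc, ← Real.exp_add]; simp
  have hhalf : Real.exp (-L) ≤ 1/2 := by
    rw [Real.exp_neg, Real.exp_log (by positivity : (0:ℝ) < (n:ℝ)+1), ← one_div]
    rw [div_le_div_iff₀ (by positivity) (by norm_num)]
    have : (1:ℝ) ≤ (n:ℝ) := by exact_mod_cast hn1
    linarith
  have h3 : (1:ℝ) < 3 * Real.sqrt ((k:ℝ) * L) := by
    have h31 : (1/3 : ℝ) < Real.sqrt ((k:ℝ) * L) := by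
      rw [show (1/3:ℝ) = Real.sqrt ((1/3)^2) by rw [Real.sqrt_sq (by norm_num)]]
      apply Real.sqrt_lt_sqrt (by norm_num)
      have hkL2 : L ≤ (k:ℝ) * L := le_mul_of_one_le_left hLpos.le hkR
      nlinarith
    linarith
  have key : 2 * Real.exp (L - X + c) < 3 * Real.sqrt ((k:ℝ) * L) := by
    have hexpo : L - X + c ≤ -L := by
      have t1 : L ≤ (k:ℝ) * L := le_mul_of_one_le_left hLpos.le hkR
      have t2 : (9/4) * ((k:ℝ) * L) ≤ X := by
        rw [hXdef]
        have hkL0 : (0:ℝ) ≤ (k:ℝ) * L := hkL.le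
        nlinarith
      have t3 : c = (k:ℝ)/4 * L := hcdef
      nlinarith
    have h1 : Real.exp (L - X + c) ≤ Real.exp (-L) := Real.exp_le_exp.mpr hexpo
    calc 2 * Real.exp (L - X + c) ≤ 2 * (1/2) := by
          have := le_trans h1 hhalf
          nlinarith [Real.exp_pos (L - X + c)]
      _ = 1 := by norm_num
      _ < 3 * Real.sqrt ((k:ℝ) * L) := h3
  have hfin : 2 * (r:ℝ) * Real.exp (L - X) <
      3 * (r:ℝ) * Real.sqrt ((k:ℝ) * L) * Real.exp (-c) := by
    have hsplit : Real.exp (L - X) = Real.exp (L - X + c) * Real.exp (-c) := by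
      rw [← Real.exp_add]; congr 1; ring
    rw [hsplit]
    calc 2 * (r:ℝ) * (Real.exp (L - X + c) * Real.exp (-c))
        = (2 * Real.exp (L - X + c)) * ((r:ℝ) * Real.exp (-c)) := by ring
      _ < (3 * Real.sqrt ((k:ℝ) * L)) * ((r:ℝ) * Real.exp (-c)) :=
          mul_lt_mul_of_pos_right key (by positivity)
      _ = 3 * (r:ℝ) * Real.sqrt ((k:ℝ) * L) * Real.exp (-c) := by ring
  calc ((n + 1 - m : ℕ) : ℝ) * (2 * r * Real.exp (-(ε ^ 2 * (m.choose k : ℝ)) / (4 * r)))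
      ≤ Real.exp L * (2 * r * Real.exp (-X)) := by
        apply mul_le_mul hP1 (by apply mul_le_mul_of_nonneg_left hexp1 (by positivity))
          (by positivity) (by positivity)
    _ = 2 * (r:ℝ) * Real.exp (L - X) := by
        rw [show L - X = L + (-X) by ring, Real.exp_add]; ring
    _ < 3 * (r:ℝ) * Real.sqrt ((k:ℝ) * L) * Real.exp (-c) := hfin
    _ ≤ ε := haeps

lemma card_setsize (ℓ : ℕ) :
    ((univ : Finset (Finset (Fin n))).filter fun A => A.card = ℓ).card = n.choose ℓ := by
  rw [show ((univ : Finset (Finset (Fin n))).filter fun A => A.card = ℓ)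
      = Finset.powersetCard ℓ (univ : Finset (Fin n)) by
    rw [Finset.powersetCard_eq_filter, Finset.powerset_univ]]
  rw [Finset.card_powersetCard, Finset.card_univ, Fintype.card_fin]


/-- Corollary 3.3 of the paper: existence of balanced colorings, specialized. -/
theorem balanced_coloring_exists' (n m k r : ℕ)
    (hk : 0 < k) (hr : 0 < r) (hkm : k ^ 2 ≤ m) (hmn : m ≤ n)
    (ε : ℝ) (hε : ε ∈ Set.Ioc (0 : ℝ) 1)
    (h : 3 * r * Real.sqrt (k * Real.log ((n : ℝ) + 1)) / (m : ℝ) ^ ((k : ℝ) / 4) ≤ ε) :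
    ∃ γ : {S : Finset (Fin n) // S.card = k} → Fin r, IsBalancedColoring m ε ε γ := by
  classical
  obtain ⟨hε0, hε1⟩ := hε
  set α := {S : Finset (Fin n) // S.card = k} with hα
  set M := Fintype.card α with hM
  have hr1 : 1 ≤ r := hr
  have hrR : (0:ℝ) < r := by exact_mod_cast hr
  -- the per-(ℓ,γ) count of unbalanced sets
  set Bad : ℕ → (α → Fin r) → ℕ := fun ℓ γ =>
    ((univ : Finset (Finset (Fin n))).filter fun A =>
      A.card = ℓ ∧ ¬ EpsBalancedOn γ ε A).card with hBad
  -- expectation bound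
  have hsum : ∀ ℓ : ℕ, m ≤ ℓ →
      ∑ γ : α → Fin r, ((Bad ℓ γ : ℕ) : ℝ) ≤
        (n.choose ℓ : ℝ) * ((r : ℝ) * (2 * Real.exp (-(ε ^ 2 * (m.choose k : ℝ)) / (4 * r)) *
          (r : ℝ) ^ M)) := by
    intro ℓ hℓ
    have hexch : ∑ γ : α → Fin r, ((Bad ℓ γ : ℕ) : ℝ) =
        ∑ A ∈ (univ : Finset (Finset (Fin n))).filter (fun A => A.card = ℓ),
          ((univ.filter fun γ : α → Fin r => ¬ EpsBalancedOn γ ε A).card : ℝ) := by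
      have e1 : ∀ γ : α → Fin r, ((Bad ℓ γ : ℕ) : ℝ) =
          ∑ A : Finset (Fin n), if A.card = ℓ ∧ ¬ EpsBalancedOn γ ε A then (1:ℝ) else 0 := by
        intro γ; simp only [hBad]; rw [Finset.card_filter]; push_cast; rfl
      have e2 : ∀ A : Finset (Fin n),
          ((univ.filter fun γ : α → Fin r => ¬ EpsBalancedOn γ ε A).card : ℝ) =
          ∑ γ : α → Fin r, if ¬ EpsBalancedOn γ ε A then (1:ℝ) else 0 := by
        intro A; rw [Finset.card_filter]; push_cast; rfl
      simp_rw [e1, e2]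
      rw [Finset.sum_comm, Finset.sum_filter]
      apply Finset.sum_congr rfl
      intro A _
      by_cases hA : A.card = ℓ
      · simp only [hA, true_and, if_true]
      · simp only [hA, false_and, if_false]
        simp
    rw [hexch]
    have hbound : ∀ A ∈ (univ : Finset (Finset (Fin n))).filter (fun A => A.card = ℓ),
        ((univ.filter fun γ : α → Fin r => ¬ EpsBalancedOn γ ε A).card : ℝ) ≤
        (r : ℝ) * (2 * Real.exp (-(ε ^ 2 * (m.choose k : ℝ)) / (4 * r)) * (r : ℝ) ^ M) := by
      intro A hA
      have hAcard : A.card = ℓ := (Finset.mem_filter.mp hA).2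
      refine le_trans (badA_bound hr1 hε0 hε1 A) ?_
      have hmono : Real.exp (-(ε ^ 2 * (A.card.choose k : ℝ)) / (4 * r)) ≤
          Real.exp (-(ε ^ 2 * (m.choose k : ℝ)) / (4 * r)) := by
        apply Real.exp_le_exp.mpr
        have hc : (m.choose k : ℝ) ≤ (A.card.choose k : ℝ) := by
          exact_mod_cast Nat.choose_le_choose k (hAcard ▸ hℓ)
        rw [div_eq_mul_inv, div_eq_mul_inv]
        apply mul_le_mul_of_nonneg_right _ (by positivity)
        have := mul_le_mul_of_nonneg_left hc (sq_nonneg ε)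
        linarith
      gcongr
    calc (∑ A ∈ (univ : Finset (Finset (Fin n))).filter (fun A => A.card = ℓ),
          ((univ.filter fun γ : α → Fin r => ¬ EpsBalancedOn γ ε A).card : ℝ))
        ≤ ∑ _A ∈ (univ : Finset (Finset (Fin n))).filter (fun A => A.card = ℓ),
          ((r : ℝ) * (2 * Real.exp (-(ε ^ 2 * (m.choose k : ℝ)) / (4 * r)) * (r : ℝ) ^ M)) :=
          Finset.sum_le_sum hbound
      _ = (n.choose ℓ : ℝ) * _ := by
          rw [Finset.sum_const, card_setsize, nsmul_eq_mul]
  -- Markov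
  have markov : ∀ ℓ ∈ Finset.Icc m n,
      (((univ : Finset (α → Fin r)).filter fun γ =>
          ε * (n.choose ℓ : ℝ) < (Bad ℓ γ : ℝ)).card : ℝ) ≤
        ((r : ℝ) * (2 * Real.exp (-(ε ^ 2 * (m.choose k : ℝ)) / (4 * r)) * (r : ℝ) ^ M)) / ε := by
    intro ℓ hℓ
    rw [Finset.mem_Icc] at hℓ
    have hchoose_pos : (0:ℝ) < (n.choose ℓ : ℝ) := by
      exact_mod_cast Nat.choose_pos hℓ.2
    have hmarkov1 : (((univ : Finset (α → Fin r)).filter fun γ =>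
        ε * (n.choose ℓ : ℝ) < (Bad ℓ γ : ℝ)).card : ℝ) * (ε * (n.choose ℓ : ℝ)) ≤
        ∑ γ : α → Fin r, ((Bad ℓ γ : ℕ) : ℝ) := by
      calc (((univ : Finset (α → Fin r)).filter fun γ =>
            ε * (n.choose ℓ : ℝ) < (Bad ℓ γ : ℝ)).card : ℝ) * (ε * (n.choose ℓ : ℝ))
          = ∑ _γ ∈ (univ : Finset (α → Fin r)).filter (fun γ =>
              ε * (n.choose ℓ : ℝ) < (Bad ℓ γ : ℝ)), (ε * (n.choose ℓ : ℝ)) := by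
            rw [Finset.sum_const, nsmul_eq_mul]
        _ ≤ ∑ γ ∈ (univ : Finset (α → Fin r)).filter (fun γ =>
              ε * (n.choose ℓ : ℝ) < (Bad ℓ γ : ℝ)), ((Bad ℓ γ : ℕ) : ℝ) :=
            Finset.sum_le_sum fun γ hγ => (le_of_lt (Finset.mem_filter.mp hγ).2)
        _ ≤ ∑ γ : α → Fin r, ((Bad ℓ γ : ℕ) : ℝ) :=
            Finset.sum_le_sum_of_subset_of_nonneg (Finset.filter_subset _ _)
              (fun _ _ _ => by positivity)
    have h2 := le_trans hmarkov1 (hsum ℓ hℓ.1)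
    rw [le_div_iff₀ hε0]
    calc (((univ : Finset (α → Fin r)).filter fun γ =>
          ε * (n.choose ℓ : ℝ) < (Bad ℓ γ : ℝ)).card : ℝ) * ε
        = ((((univ : Finset (α → Fin r)).filter fun γ =>
            ε * (n.choose ℓ : ℝ) < (Bad ℓ γ : ℝ)).card : ℝ) * (ε * (n.choose ℓ : ℝ)))
          / (n.choose ℓ : ℝ) := by field_simp
      _ ≤ ((n.choose ℓ : ℝ) * ((r : ℝ) * (2 * Real.exp (-(ε ^ 2 * (m.choose k : ℝ)) / (4 * r))
            * (r : ℝ) ^ M))) / (n.choose ℓ : ℝ) := by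
          gcongr
      _ = _ := by field_simp
  -- union bound over ℓ and existence of a good coloring
  set B : Finset (α → Fin r) := (univ : Finset (α → Fin r)).filter (fun γ =>
    ∃ ℓ ∈ Finset.Icc m n, ε * (n.choose ℓ : ℝ) < (Bad ℓ γ : ℝ)) with hBdef
  have hBsub : B ⊆ (Finset.Icc m n).biUnion fun ℓ =>
      (univ : Finset (α → Fin r)).filter fun γ => ε * (n.choose ℓ : ℝ) < (Bad ℓ γ : ℝ) := by
    intro γ hγ
    rw [hBdef, Finset.mem_filter] at hγ
    obtain ⟨ℓ, hℓ, hlt⟩ := hγ.2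
    exact Finset.mem_biUnion.mpr ⟨ℓ, hℓ, Finset.mem_filter.mpr ⟨Finset.mem_univ _, hlt⟩⟩
  have hBcard : (B.card : ℝ) < (r : ℝ) ^ M := by
    have h1 : B.card ≤ ∑ ℓ ∈ Finset.Icc m n,
        ((univ : Finset (α → Fin r)).filter fun γ =>
          ε * (n.choose ℓ : ℝ) < (Bad ℓ γ : ℝ)).card :=
      le_trans (Finset.card_le_card hBsub) Finset.card_biUnion_le
    have h2 : (B.card : ℝ) ≤ ((n + 1 - m : ℕ) : ℝ) *
        (((r : ℝ) * (2 * Real.exp (-(ε ^ 2 * (m.choose k : ℝ)) / (4 * r)) * (r : ℝ) ^ M)) / ε) := by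
      calc (B.card : ℝ) ≤ (∑ ℓ ∈ Finset.Icc m n,
            ((univ : Finset (α → Fin r)).filter fun γ =>
              ε * (n.choose ℓ : ℝ) < (Bad ℓ γ : ℝ)).card : ℕ) := by exact_mod_cast h1
        _ = ∑ ℓ ∈ Finset.Icc m n, (((univ : Finset (α → Fin r)).filter fun γ =>
              ε * (n.choose ℓ : ℝ) < (Bad ℓ γ : ℝ)).card : ℝ) := by push_cast; ring
        _ ≤ ∑ _ℓ ∈ Finset.Icc m n, (((r : ℝ) *
              (2 * Real.exp (-(ε ^ 2 * (m.choose k : ℝ)) / (4 * r)) * (r : ℝ) ^ M)) / ε) :=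
            Finset.sum_le_sum markov
        _ = ((n + 1 - m : ℕ) : ℝ) * _ := by
            rw [Finset.sum_const, Nat.card_Icc, nsmul_eq_mul]
    have hkey := key_numeric n m k r hk hr hkm hmn hε0 hε1 h
    have h3 : ((n + 1 - m : ℕ) : ℝ) *
        (((r : ℝ) * (2 * Real.exp (-(ε ^ 2 * (m.choose k : ℝ)) / (4 * r)) * (r : ℝ) ^ M)) / ε)
        = (((n + 1 - m : ℕ) : ℝ) *
            (2 * r * Real.exp (-(ε ^ 2 * (m.choose k : ℝ)) / (4 * r))) / ε) * (r : ℝ) ^ M := by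
      field_simp
    calc (B.card : ℝ) ≤ _ := h2
      _ = (((n + 1 - m : ℕ) : ℝ) *
            (2 * r * Real.exp (-(ε ^ 2 * (m.choose k : ℝ)) / (4 * r))) / ε) * (r : ℝ) ^ M := h3
      _ < 1 * (r : ℝ) ^ M := by
          apply mul_lt_mul_of_pos_right hkey (by positivity)
      _ = (r : ℝ) ^ M := by ring
  have hex : ∃ γ : α → Fin r, γ ∉ B := by
    by_contra hcon
    push_neg at hcon
    have hsub2 : (univ : Finset (α → Fin r)) ⊆ B := fun γ _ => hcon γ
    have hle := Finset.card_le_card hsub2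
    have hcardUniv : (univ : Finset (α → Fin r)).card = r ^ M := by
      rw [Finset.card_univ, Fintype.card_fun, Fintype.card_fin, hM]
    rw [hcardUniv] at hle
    have : ((r ^ M : ℕ) : ℝ) ≤ (B.card : ℝ) := by exact_mod_cast hle
    push_cast at this
    linarith
  obtain ⟨γ, hγ⟩ := hex
  refine ⟨γ, ?_⟩
  intro ℓ hmℓ hℓn
  have hγ2 : ¬ ∃ ℓ ∈ Finset.Icc m n, ε * (n.choose ℓ : ℝ) < (Bad ℓ γ : ℝ) := by
    intro hcon
    exact hγ (by rw [hBdef]; exact Finset.mem_filter.mpr ⟨Finset.mem_univ _, hcon⟩)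
  push_neg at hγ2
  have hbadle : (Bad ℓ γ : ℝ) ≤ ε * (n.choose ℓ : ℝ) :=
    hγ2 ℓ (Finset.mem_Icc.mpr ⟨hmℓ, hℓn⟩)
  have hid : Nat.card {A : Finset (Fin n) // A.card = ℓ ∧ EpsBalancedOn γ ε A}
      = ((univ : Finset (Finset (Fin n))).filter fun A =>
          A.card = ℓ ∧ EpsBalancedOn γ ε A).card := by
    rw [Nat.card_eq_fintype_card, Fintype.card_subtype]
  have hsplit : ((univ : Finset (Finset (Fin n))).filter fun A =>
        A.card = ℓ ∧ EpsBalancedOn γ ε A).card + Bad ℓ γ = n.choose ℓ := by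
    simp only [hBad]
    have hpart := Finset.card_filter_add_card_filter_not
      (s := (univ : Finset (Finset (Fin n))).filter fun A => A.card = ℓ)
      (p := fun A => EpsBalancedOn γ ε A)
    rw [Finset.filter_filter, Finset.filter_filter, card_setsize] at hpart
    exact hpart
  rw [hid]
  have hsplitR : (((univ : Finset (Finset (Fin n))).filter fun A =>
      A.card = ℓ ∧ EpsBalancedOn γ ε A).card : ℝ) + (Bad ℓ γ : ℝ) = (n.choose ℓ : ℝ) := by
    exact_mod_cast congrArg (Nat.cast (R := ℝ)) hsplit
  have hCpos : (0:ℝ) ≤ (n.choose ℓ : ℝ) := by positivity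
  nlinarith [hsplitR, hbadle]
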